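/- Let X = Y = Z = {0,1}, f(x,y) = x ∧ y, P_{XY} uniform on {0,1}². Suppose P_{ŨX̃Ỹ} is a joint distribution on U × X × Y with full-support marginal P_{X̃Ỹ} (all four values positive) satisfying the Markov chain Ũ −∘− X̃ −∘− Ỹ, and let Z̃ = f(X̃, Ỹ). If I(Ũ ∧ Ỹ | X̃) = 0 and H(Z̃ | Ũ, Ỹ) = 0, then H(X̃ | Ũ) = 0. -/

import Mathlib

open Real Finset
open scoped Classical

noncomputable section

/-- Shannon entropy (base 2) of a pmf on a finite type. -/
def ent {S : Type*} [Fintype S] (p : S → ℝ) : ℝ :=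
  - ∑ s, p s * Real.logb 2 (p s)

/-- Pushforward pmf under a map. -/
def push {S T : Type*} [Fintype S] [Fintype T] (p : S → ℝ) (f : S → T) : T → ℝ :=
  fun t => ∑ s, if f s = t then p s else 0

/-- Entropy of the random variable `f` under joint pmf `p`. -/
def entOf {S T : Type*} [Fintype S] [Fintype T] (p : S → ℝ) (f : S → T) : ℝ :=
  ent (push p f)

/-- Conditional entropy `H(f | g)` under joint pmf `p`. -/
def condEnt {S T V : Type*} [Fintype S] [Fintype T] [Fintype V]
    (p : S → ℝ) (f : S → T) (g : S → V) : ℝ :=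
  entOf p (fun s => (f s, g s)) - entOf p g

/-- Mutual information `I(f ∧ g)` under joint pmf `p`. -/
def miOf {S T V : Type*} [Fintype S] [Fintype T] [Fintype V]
    (p : S → ℝ) (f : S → T) (g : S → V) : ℝ :=
  entOf p f + entOf p g - entOf p (fun s => (f s, g s))

/-- Conditional mutual information `I(f ∧ g | h)` under joint pmf `p`. -/
def cmiOf {S T V W : Type*} [Fintype S] [Fintype T] [Fintype V] [Fintype W]
    (p : S → ℝ) (f : S → T) (g : S → V) (h : S → W) : ℝ :=
  condEnt p f h + condEnt p g h - condEnt p (fun s => (f s, g s)) h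

/-- Kullback–Leibler divergence (base 2). -/
def kl {S : Type*} [Fintype S] (p q : S → ℝ) : ℝ :=
  ∑ s, p s * Real.logb 2 (p s / q s)

end

section helpers

variable {S T V : Type*} [Fintype S] [Fintype T] [Fintype V]

lemma push_nonneg (p : S → ℝ) (hp : ∀ s, 0 ≤ p s) (f : S → T) (t : T) :
    0 ≤ push p f t := by
  refine Finset.sum_nonneg fun s _ => ?_
  split
  · exact hp s
  · exact le_rfl

lemma le_push (p : S → ℝ) (hp : ∀ s, 0 ≤ p s) (f : S → T) (s : S) :
    p s ≤ push p f (f s) := by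
  have h := Finset.single_le_sum (f := fun s' => if f s' = f s then p s' else 0)
    (fun s' _ => by split <;> [exact hp s'; exact le_rfl]) (Finset.mem_univ s)
  simpa [push] using h

lemma push_le_push (p : S → ℝ) (hp : ∀ s, 0 ≤ p s) (f : S → T) (g : S → V)
    (k : T → V) (hk : ∀ s, k (f s) = g s) (t : T) :
    push p f t ≤ push p g (k t) := by
  refine Finset.sum_le_sum fun s _ => ?_
  by_cases h : f s = t
  · have hg : g s = k t := by rw [← hk s, h]
    rw [if_pos h, if_pos hg]
  · rw [if_neg h]
    split
    · exact hp s
    · exact le_rfl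

lemma push_add_le (p : S → ℝ) (hp : ∀ s, 0 ≤ p s) (f : S → T) (g : S → V)
    {t₁ t₂ : T} {v : V} (hne : t₁ ≠ t₂)
    (h1 : ∀ s, f s = t₁ → g s = v) (h2 : ∀ s, f s = t₂ → g s = v) :
    push p f t₁ + push p f t₂ ≤ push p g v := by
  simp only [push, ← Finset.sum_add_distrib]
  refine Finset.sum_le_sum fun s _ => ?_
  by_cases ha : f s = t₁
  · have hb : ¬ f s = t₂ := fun hb => hne (ha ▸ hb ▸ rfl)
    rw [if_pos ha, if_neg hb, add_zero, if_pos (h1 s ha)]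
  · rw [if_neg ha]
    by_cases hb : f s = t₂
    · rw [if_pos hb, zero_add, if_pos (h2 s hb)]
    · rw [if_neg hb, add_zero]
      split
      · exact hp s
      · exact le_rfl

lemma entOf_eq (p : S → ℝ) (f : S → T) :
    entOf p f = -∑ s, p s * Real.logb 2 (push p f (f s)) := by
  rw [entOf, ent]
  congr 1
  have key : ∀ t, push p f t * Real.logb 2 (push p f t)
      = ∑ s, if f s = t then p s * Real.logb 2 (push p f t) else 0 := by
    intro t
    rw [push]
    rw [Finset.sum_mul]
    exact Finset.sum_congr rfl fun s _ => by split <;> simp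
  calc ∑ t, push p f t * Real.logb 2 (push p f t)
      = ∑ t, ∑ s, if f s = t then p s * Real.logb 2 (push p f t) else 0 :=
        Finset.sum_congr rfl fun t _ => key t
    _ = ∑ s, ∑ t, if f s = t then p s * Real.logb 2 (push p f t) else 0 :=
        Finset.sum_comm
    _ = ∑ s, p s * Real.logb 2 (push p f (f s)) := by
        refine Finset.sum_congr rfl fun s _ => ?_
        rw [Finset.sum_ite_eq]
        simp

lemma condEnt_eq (p : S → ℝ) (f : S → T) (g : S → V) :
    condEnt p f g = ∑ s, p s *
      (Real.logb 2 (push p g (g s)) -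
        Real.logb 2 (push p (fun s => (f s, g s)) (f s, g s))) := by
  rw [condEnt, entOf_eq, entOf_eq]
  simp only [mul_sub]
  rw [Finset.sum_sub_distrib]
  ring

lemma condEnt_term_nonneg (p : S → ℝ) (hp : ∀ s, 0 ≤ p s) (f : S → T) (g : S → V) (s : S) :
    0 ≤ p s * (Real.logb 2 (push p g (g s)) -
        Real.logb 2 (push p (fun s => (f s, g s)) (f s, g s))) := by
  rcases eq_or_lt_of_le (hp s) with h | h
  · simp [← h]
  · refine mul_nonneg h.le ?_
    have h1 : 0 < push p (fun s => (f s, g s)) (f s, g s) :=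
      lt_of_lt_of_le h (le_push p hp _ s)
    have h2 : push p (fun s => (f s, g s)) (f s, g s) ≤ push p g (g s) :=
      push_le_push p hp _ g Prod.snd (fun _ => rfl) _
    have := Real.logb_le_logb_of_le (b := 2) one_lt_two h1 h2
    linarith

/-- From zero conditional entropy: `f` is determined by `g` on the support. -/
lemma det_of_condEnt_zero (p : S → ℝ) (hp : ∀ s, 0 ≤ p s) (f : S → T) (g : S → V)
    (h : condEnt p f g = 0) :
    ∀ s s', 0 < p s → 0 < p s' → g s = g s' → f s = f s' := by
  rw [condEnt_eq] at h
  have hterm : ∀ s ∈ Finset.univ, p s *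
      (Real.logb 2 (push p g (g s)) -
        Real.logb 2 (push p (fun s => (f s, g s)) (f s, g s))) = 0 :=
    (Finset.sum_eq_zero_iff_of_nonneg
      (fun s _ => condEnt_term_nonneg p hp f g s)).mp h
  have key : ∀ s0, 0 < p s0 →
      push p (fun s => (f s, g s)) (f s0, g s0) = push p g (g s0) := by
    intro s0 h0
    have h1 : 0 < push p (fun s => (f s, g s)) (f s0, g s0) :=
      lt_of_lt_of_le h0 (le_push p hp _ s0)
    have h2 : push p (fun s => (f s, g s)) (f s0, g s0) ≤ push p g (g s0) :=
      push_le_push p hp _ g Prod.snd (fun _ => rfl) _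
    rcases eq_or_lt_of_le h2 with he | hlt
    · exact he
    · exfalso
      have ht := hterm s0 (Finset.mem_univ s0)
      have hlog := Real.logb_lt_logb (b := 2) one_lt_two h1 hlt
      nlinarith
  intro s s' hs hs' hgg
  by_contra hff
  have k1 := key s hs
  have k2 := key s' hs'
  have hne : (f s, g s) ≠ (f s', g s') := fun hc => hff (Prod.ext_iff.mp hc).1
  have hle := push_add_le p hp (fun s => (f s, g s)) g (v := g s) hne
    (fun s0 hs0 => congrArg Prod.snd hs0)
    (fun s0 hs0 => (congrArg Prod.snd hs0).trans hgg.symm)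
  rw [k1, k2, ← hgg] at hle
  have hpos : 0 < push p g (g s) := lt_of_lt_of_le hs (le_push p hp g s)
  linarith

/-- Converse: determinism gives zero conditional entropy. -/
lemma condEnt_zero_of_det (p : S → ℝ) (hp : ∀ s, 0 ≤ p s) (f : S → T) (g : S → V)
    (hdet : ∀ s s', 0 < p s → 0 < p s' → g s = g s' → f s = f s') :
    condEnt p f g = 0 := by
  rw [condEnt_eq]
  refine Finset.sum_eq_zero fun s _ => ?_
  rcases eq_or_lt_of_le (hp s) with h | h
  · simp [← h]
  · have hpe : push p (fun s => (f s, g s)) (f s, g s) = push p g (g s) := by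
      simp only [push]
      refine Finset.sum_congr rfl fun t _ => ?_
      rcases eq_or_lt_of_le (hp t) with h0 | h0
      · split <;> split <;> simp [← h0]
      · by_cases hgt : g t = g s
        · have hft := hdet t s h0 h hgt
          have hc : (f t, g t) = (f s, g s) := by rw [hft, hgt]
          rw [if_pos hc, if_pos hgt]
        · have hc : ¬ ((f t, g t) = (f s, g s)) := fun hc => hgt (Prod.ext_iff.mp hc).2
          rw [if_neg hc, if_neg hgt]
    rw [hpe]
    ring

lemma sum_push (p : S → ℝ) (f : S → T) : ∑ t, push p f t = ∑ s, p s := by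
  simp only [push]
  rw [Finset.sum_comm]
  refine Finset.sum_congr rfl fun s _ => ?_
  rw [Finset.sum_ite_eq]
  simp

lemma sum_push_pair (p : S → ℝ) (f : S → T) (g : S → V) (v : V) :
    ∑ t, push p (fun s => (f s, g s)) (t, v) = push p g v := by
  simp only [push]
  rw [Finset.sum_comm]
  refine Finset.sum_congr rfl fun s _ => ?_
  simp only [Prod.mk.injEq, ite_and]
  rw [Finset.sum_ite_eq]
  simp

lemma push_eq_of_injective (p : S → ℝ) {f : S → T} (hf : Function.Injective f) (s : S) :
    push p f (f s) = p s := by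
  simp only [push]
  rw [Finset.sum_eq_single s]
  · simp
  · intro b _ hb
    exact if_neg (fun hc => hb (hf hc))
  · intro hs
    exact absurd (Finset.mem_univ s) hs

end helpers

theorem stmt11 {U : Type*} [Fintype U]
    (p : U × Bool × Bool → ℝ) (hp : ∀ s, 0 ≤ p s) (hp1 : ∑ s, p s = 1)
    (hfull : ∀ x y, 0 < push p (fun s => s.2) (x, y))
    (hmarkov : cmiOf p (fun s => s.1) (fun s => s.2.2) (fun s => s.2.1) = 0)
    (hz : condEnt p (fun s => s.2.1 && s.2.2) (fun s => (s.1, s.2.2)) = 0) :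
    condEnt p (fun s => s.2.1) (fun s => s.1) = 0 := by
  have log2pos : (0:ℝ) < Real.log 2 := Real.log_pos one_lt_two
  -- the joint push is just p itself
  have hinj : Function.Injective (fun s : U × Bool × Bool => ((s.1, s.2.2), s.2.1)) := by
    intro a b hab
    simp only [Prod.ext_iff] at hab ⊢
    exact ⟨hab.1.1, hab.2, hab.1.2⟩
  have hjoint : ∀ s : U × Bool × Bool,
      push p (fun s => ((s.1, s.2.2), s.2.1)) ((s.1, s.2.2), s.2.1) = p s :=
    fun s => push_eq_of_injective p hinj s
  -- express the CMI as a single sum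
  have hcmi : cmiOf p (fun s => s.1) (fun s => s.2.2) (fun s => s.2.1)
      = ∑ s : U × Bool × Bool, p s * (Real.logb 2 (p s)
          + Real.logb 2 (push p (fun s : U × Bool × Bool => s.2.1) s.2.1)
          - Real.logb 2 (push p (fun s : U × Bool × Bool => (s.1, s.2.1)) (s.1, s.2.1))
          - Real.logb 2 (push p (fun s : U × Bool × Bool => (s.2.2, s.2.1)) (s.2.2, s.2.1))) := by
    rw [cmiOf, condEnt_eq, condEnt_eq, condEnt_eq]
    rw [← Finset.sum_add_distrib, ← Finset.sum_sub_distrib]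
    refine Finset.sum_congr rfl fun s _ => ?_
    rw [hjoint s]
    ring
  have hphp : ∀ s : U × Bool × Bool,
      p s ≤ push p (fun s : U × Bool × Bool => s.2.1) s.2.1 := fun s => le_push p hp _ s
  have hpfhp : ∀ s : U × Bool × Bool,
      p s ≤ push p (fun s : U × Bool × Bool => (s.1, s.2.1)) (s.1, s.2.1) :=
    fun s => le_push p hp _ s
  have hpghp : ∀ s : U × Bool × Bool,
      p s ≤ push p (fun s : U × Bool × Bool => (s.2.2, s.2.1)) (s.2.2, s.2.1) :=
    fun s => le_push p hp _ s
  have hDnonneg : ∀ s : U × Bool × Bool,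
      0 ≤ push p (fun s : U × Bool × Bool => (s.1, s.2.1)) (s.1, s.2.1)
        * push p (fun s : U × Bool × Bool => (s.2.2, s.2.1)) (s.2.2, s.2.1)
        / push p (fun s : U × Bool × Bool => s.2.1) s.2.1 := by
    intro s
    have h1 := push_nonneg p hp (fun s : U × Bool × Bool => (s.1, s.2.1)) (s.1, s.2.1)
    have h2 := push_nonneg p hp (fun s : U × Bool × Bool => (s.2.2, s.2.1)) (s.2.2, s.2.1)
    have h3 := push_nonneg p hp (fun s : U × Bool × Bool => s.2.1) s.2.1
    positivity
  -- pointwise lower bound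
  have hpoint : ∀ s : U × Bool × Bool,
      p s - push p (fun s : U × Bool × Bool => (s.1, s.2.1)) (s.1, s.2.1)
          * push p (fun s : U × Bool × Bool => (s.2.2, s.2.1)) (s.2.2, s.2.1)
          / push p (fun s : U × Bool × Bool => s.2.1) s.2.1
      ≤ (p s * (Real.logb 2 (p s)
          + Real.logb 2 (push p (fun s : U × Bool × Bool => s.2.1) s.2.1)
          - Real.logb 2 (push p (fun s : U × Bool × Bool => (s.1, s.2.1)) (s.1, s.2.1))
          - Real.logb 2 (push p (fun s : U × Bool × Bool => (s.2.2, s.2.1)) (s.2.2, s.2.1))))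
        * Real.log 2 := by
    intro s
    rcases eq_or_lt_of_le (hp s) with h0 | h0
    · rw [← h0]
      simp only [zero_mul, zero_sub, zero_mul]
      linarith [hDnonneg s]
    · have hb : 0 < push p (fun s : U × Bool × Bool => s.2.1) s.2.1 :=
        lt_of_lt_of_le h0 (hphp s)
      have hc : 0 < push p (fun s : U × Bool × Bool => (s.1, s.2.1)) (s.1, s.2.1) :=
        lt_of_lt_of_le h0 (hpfhp s)
      have hd : 0 < push p (fun s : U × Bool × Bool => (s.2.2, s.2.1)) (s.2.2, s.2.1) :=
        lt_of_lt_of_le h0 (hpghp s)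
      set a := p s with ha
      set b := push p (fun s : U × Bool × Bool => s.2.1) s.2.1 with hbdef
      set c := push p (fun s : U × Bool × Bool => (s.1, s.2.1)) (s.1, s.2.1) with hcdef
      set d := push p (fun s : U × Bool × Bool => (s.2.2, s.2.1)) (s.2.2, s.2.1) with hddef
      have hy : (0:ℝ) < c * d / (a * b) := by positivity
      have hlog := Real.log_le_sub_one_of_pos hy
      rw [Real.log_div (by positivity) (by positivity), Real.log_mul (ne_of_gt hc) (ne_of_gt hd),
        Real.log_mul (ne_of_gt h0) (ne_of_gt hb)] at hlog
      have hexp : (a * (Real.logb 2 a + Real.logb 2 b - Real.logb 2 c - Real.logb 2 d))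
          * Real.log 2
          = a * (Real.log a + Real.log b - Real.log c - Real.log d) := by
        simp only [Real.logb]
        field_simp
      rw [hexp]
      have hdd : c * d / b = a * (c * d / (a * b)) := by
        field_simp
      rw [hdd]
      nlinarith [h0, hlog]
  -- sum of D is at most 1
  have hmarg_u : ∀ x : Bool,
      ∑ u : U, push p (fun s : U × Bool × Bool => (s.1, s.2.1)) (u, x)
        = push p (fun s : U × Bool × Bool => s.2.1) x :=
    fun x => sum_push_pair p (fun s : U × Bool × Bool => s.1)
      (fun s : U × Bool × Bool => s.2.1) x
  have hmarg_y : ∀ x : Bool,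
      ∑ y : Bool, push p (fun s : U × Bool × Bool => (s.2.2, s.2.1)) (y, x)
        = push p (fun s : U × Bool × Bool => s.2.1) x :=
    fun x => sum_push_pair p (fun s : U × Bool × Bool => s.2.2)
      (fun s : U × Bool × Bool => s.2.1) x
  have hsumD : ∑ s : U × Bool × Bool,
      push p (fun s : U × Bool × Bool => (s.1, s.2.1)) (s.1, s.2.1)
        * push p (fun s : U × Bool × Bool => (s.2.2, s.2.1)) (s.2.2, s.2.1)
        / push p (fun s : U × Bool × Bool => s.2.1) s.2.1 ≤ 1 := by
    calc ∑ s : U × Bool × Bool,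
        push p (fun s : U × Bool × Bool => (s.1, s.2.1)) (s.1, s.2.1)
          * push p (fun s : U × Bool × Bool => (s.2.2, s.2.1)) (s.2.2, s.2.1)
          / push p (fun s : U × Bool × Bool => s.2.1) s.2.1
        = ∑ u : U, ∑ x : Bool, ∑ y : Bool,
            push p (fun s : U × Bool × Bool => (s.1, s.2.1)) (u, x)
              * push p (fun s : U × Bool × Bool => (s.2.2, s.2.1)) (y, x)
              / push p (fun s : U × Bool × Bool => s.2.1) x := by
          rw [Fintype.sum_prod_type]
          refine Finset.sum_congr rfl fun u _ => ?_
          rw [Fintype.sum_prod_type]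
      _ = ∑ x : Bool, ∑ u : U, ∑ y : Bool,
            push p (fun s : U × Bool × Bool => (s.1, s.2.1)) (u, x)
              * push p (fun s : U × Bool × Bool => (s.2.2, s.2.1)) (y, x)
              / push p (fun s : U × Bool × Bool => s.2.1) x := Finset.sum_comm
      _ = ∑ x : Bool, (∑ u : U, push p (fun s : U × Bool × Bool => (s.1, s.2.1)) (u, x))
            * ((∑ y : Bool, push p (fun s : U × Bool × Bool => (s.2.2, s.2.1)) (y, x))
              / push p (fun s : U × Bool × Bool => s.2.1) x) := by
          refine Finset.sum_congr rfl fun x _ => ?_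
          rw [Finset.sum_mul]
          refine Finset.sum_congr rfl fun u _ => ?_
          rw [Finset.sum_div, Finset.mul_sum]
          refine Finset.sum_congr rfl fun y _ => ?_
          ring
      _ ≤ ∑ x : Bool, push p (fun s : U × Bool × Bool => s.2.1) x := by
          refine Finset.sum_le_sum fun x _ => ?_
          rw [hmarg_u x, hmarg_y x]
          rcases eq_or_lt_of_le (push_nonneg p hp (fun s : U × Bool × Bool => s.2.1) x)
            with h | h
          · rw [← h]
            simp
          · rw [div_self (ne_of_gt h), mul_one]
      _ = 1 := by rw [sum_push, hp1]
  -- equality analysis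
  have hLsum : ∑ s : U × Bool × Bool, p s * (Real.logb 2 (p s)
          + Real.logb 2 (push p (fun s : U × Bool × Bool => s.2.1) s.2.1)
          - Real.logb 2 (push p (fun s : U × Bool × Bool => (s.1, s.2.1)) (s.1, s.2.1))
          - Real.logb 2 (push p (fun s : U × Bool × Bool => (s.2.2, s.2.1)) (s.2.2, s.2.1)))
      = 0 := by rw [← hcmi]; exact hmarkov
  have hzero : ∀ s ∈ Finset.univ,
      (p s * (Real.logb 2 (p s)
          + Real.logb 2 (push p (fun s : U × Bool × Bool => s.2.1) s.2.1)
          - Real.logb 2 (push p (fun s : U × Bool × Bool => (s.1, s.2.1)) (s.1, s.2.1))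
          - Real.logb 2 (push p (fun s : U × Bool × Bool => (s.2.2, s.2.1)) (s.2.2, s.2.1))))
        * Real.log 2
        - (p s - push p (fun s : U × Bool × Bool => (s.1, s.2.1)) (s.1, s.2.1)
            * push p (fun s : U × Bool × Bool => (s.2.2, s.2.1)) (s.2.2, s.2.1)
            / push p (fun s : U × Bool × Bool => s.2.1) s.2.1) = 0 := by
    have hs1 : ∑ s : U × Bool × Bool, ((p s * (Real.logb 2 (p s)
          + Real.logb 2 (push p (fun s : U × Bool × Bool => s.2.1) s.2.1)
          - Real.logb 2 (push p (fun s : U × Bool × Bool => (s.1, s.2.1)) (s.1, s.2.1))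
          - Real.logb 2 (push p (fun s : U × Bool × Bool => (s.2.2, s.2.1)) (s.2.2, s.2.1))))
        * Real.log 2
        - (p s - push p (fun s : U × Bool × Bool => (s.1, s.2.1)) (s.1, s.2.1)
            * push p (fun s : U × Bool × Bool => (s.2.2, s.2.1)) (s.2.2, s.2.1)
            / push p (fun s : U × Bool × Bool => s.2.1) s.2.1)) = 0 := by
      rw [Finset.sum_sub_distrib, ← Finset.sum_mul, hLsum, zero_mul, zero_sub,
        Finset.sum_sub_distrib, hp1, neg_sub]
      have h2 : (0:ℝ) ≤ ∑ s : U × Bool × Bool, ((p s * (Real.logb 2 (p s)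
            + Real.logb 2 (push p (fun s : U × Bool × Bool => s.2.1) s.2.1)
            - Real.logb 2 (push p (fun s : U × Bool × Bool => (s.1, s.2.1)) (s.1, s.2.1))
            - Real.logb 2 (push p (fun s : U × Bool × Bool => (s.2.2, s.2.1)) (s.2.2, s.2.1))))
          * Real.log 2
          - (p s - push p (fun s : U × Bool × Bool => (s.1, s.2.1)) (s.1, s.2.1)
              * push p (fun s : U × Bool × Bool => (s.2.2, s.2.1)) (s.2.2, s.2.1)
              / push p (fun s : U × Bool × Bool => s.2.1) s.2.1)) :=
        Finset.sum_nonneg fun s _ => by linarith [hpoint s]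
      rw [Finset.sum_sub_distrib, ← Finset.sum_mul, hLsum, zero_mul, zero_sub,
        Finset.sum_sub_distrib, hp1, neg_sub] at h2
      linarith [hsumD]
    exact (Finset.sum_eq_zero_iff_of_nonneg
      (fun s _ => by linarith [hpoint s])).mp hs1
  -- the Markov identity
  have hM : ∀ s : U × Bool × Bool,
      p s * push p (fun s : U × Bool × Bool => s.2.1) s.2.1
      = push p (fun s : U × Bool × Bool => (s.1, s.2.1)) (s.1, s.2.1)
        * push p (fun s : U × Bool × Bool => (s.2.2, s.2.1)) (s.2.2, s.2.1) := by
    intro s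
    have he := hzero s (Finset.mem_univ s)
    set a := p s with ha
    set b := push p (fun s : U × Bool × Bool => s.2.1) s.2.1 with hbdef
    set c := push p (fun s : U × Bool × Bool => (s.1, s.2.1)) (s.1, s.2.1) with hcdef
    set d := push p (fun s : U × Bool × Bool => (s.2.2, s.2.1)) (s.2.2, s.2.1) with hddef
    rcases eq_or_lt_of_le (hp s) with h0 | h0
    · rw [← ha] at h0
      rw [← h0] at he ⊢
      rw [zero_mul]
      simp only [zero_mul, zero_sub, sub_neg_eq_add, zero_add] at he
      -- he : c * d / b = 0
      by_cases hb0 : b = 0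
      · have h1 : c ≤ b := push_le_push p hp _ _ Prod.snd (fun _ => rfl) (s.1, s.2.1)
        have h2 : 0 ≤ c := push_nonneg p hp _ _
        have : c = 0 := le_antisymm (hb0 ▸ h1) h2
        rw [this, zero_mul]
      · rcases div_eq_zero_iff.mp he with h | h
        · exact h.symm
        · exact absurd h hb0
    · rw [← ha] at h0
      have hb : 0 < b := lt_of_lt_of_le h0 (by rw [ha, hbdef]; exact hphp s)
      have hc : 0 < c := lt_of_lt_of_le h0 (by rw [ha, hcdef]; exact hpfhp s)
      have hd : 0 < d := lt_of_lt_of_le h0 (by rw [ha, hddef]; exact hpghp s)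
      have hy : (0:ℝ) < c * d / (a * b) := by positivity
      have hexp : (a * (Real.logb 2 a + Real.logb 2 b - Real.logb 2 c - Real.logb 2 d))
          * Real.log 2
          = a * (Real.log a + Real.log b - Real.log c - Real.log d) := by
        simp only [Real.logb]
        field_simp
      have hdd : c * d / b = a * (c * d / (a * b)) := by
        field_simp
      rw [hexp, hdd] at he
      have hlogcomb : Real.log (c * d / (a * b))
          = Real.log c + Real.log d - (Real.log a + Real.log b) := by
        rw [Real.log_div (by positivity) (by positivity),
          Real.log_mul (ne_of_gt hc) (ne_of_gt hd), Real.log_mul (ne_of_gt h0) (ne_of_gt hb)]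
      have hkey : a * Real.log (c * d / (a * b)) = a * (c * d / (a * b) - 1) := by
        rw [hlogcomb]
        linarith [he]
      have hy1 : c * d / (a * b) = 1 := by
        by_contra hne
        have hlt := Real.log_lt_sub_one_of_pos hy hne
        nlinarith [hkey, h0, hlt]
      have : c * d = a * b := by
        rw [div_eq_one_iff_eq (by positivity : (a * b) ≠ 0)] at hy1
        exact hy1
      linarith [this]
  -- positivity transfer to y = true
  have hgh_full : ∀ x : Bool,
      0 < push p (fun s : U × Bool × Bool => (s.2.2, s.2.1)) (true, x) := by
    intro x
    have h := hfull x true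
    have h2 : push p (fun s : U × Bool × Bool => s.2) (x, true)
        ≤ push p (fun s : U × Bool × Bool => (s.2.2, s.2.1)) (true, x) :=
      push_le_push p hp _ _ (fun q : Bool × Bool => (q.2, q.1)) (fun _ => rfl) (x, true)
    exact lt_of_lt_of_le h h2
  have hpos1 : ∀ s : U × Bool × Bool, 0 < p s → 0 < p (s.1, s.2.1, true) := by
    intro s hs
    have hb : 0 < push p (fun s : U × Bool × Bool => s.2.1) s.2.1 :=
      lt_of_lt_of_le hs (hphp s)
    have hc : 0 < push p (fun s : U × Bool × Bool => (s.1, s.2.1)) (s.1, s.2.1) :=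
      lt_of_lt_of_le hs (hpfhp s)
    have hd : 0 < push p (fun s : U × Bool × Bool => (s.2.2, s.2.1)) (true, s.2.1) :=
      hgh_full s.2.1
    have hm : p (s.1, s.2.1, true) * push p (fun s : U × Bool × Bool => s.2.1) s.2.1
        = push p (fun s : U × Bool × Bool => (s.1, s.2.1)) (s.1, s.2.1)
          * push p (fun s : U × Bool × Bool => (s.2.2, s.2.1)) (true, s.2.1) :=
      hM (s.1, s.2.1, true)
    nlinarith [hp (s.1, s.2.1, true), mul_pos hc hd]
  -- determinism from hz
  have hdz := det_of_condEnt_zero p hp (fun s => s.2.1 && s.2.2) (fun s => (s.1, s.2.2)) hz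
  refine condEnt_zero_of_det p hp _ _ ?_
  intro s s' hs hs' h1
  have h1' : s.1 = s'.1 := h1
  have ha := hpos1 s hs
  have hb := hpos1 s' hs'
  have hgeq : ((s.1, s.2.1, true) : U × Bool × Bool).1 = s.1 := rfl
  have hd := hdz (s.1, s.2.1, true) (s'.1, s'.2.1, true) ha hb
    (show ((s.1:U), true) = (s'.1, true) by rw [h1'])
  have hd' : (s.2.1 && true) = (s'.2.1 && true) := hd
  simpa using hd'
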